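/- (Time compatibility test.) Let ε ≥ 0, let c ∈ ℝ^K, and for two time indices l and m let R_l, R_m ∈ SO(3), p_l, p_m ∈ ℝ³. Suppose the four inlier measurements of keypoints i and j at times l and m satisfy y_t^i = R_t(B_i c) + p_t + ε_t^i and y_t^j = R_t(B_j c) + p_t + ε_t^j for t ∈ {l, m}, with ‖ε_l^i‖, ‖ε_l^j‖, ‖ε_m^i‖, ‖ε_m^j‖ all at most ε. Then | ‖y_l^i − y_l^j‖ − ‖y_m^i − y_m^j‖ | ≤ 4ε. -/

import Mathlib

open Matrix

/-- SO(3): real 3×3 matrices with `RᵀR = I` and `det R = 1`. -/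
def SO3 : Set (Matrix (Fin 3) (Fin 3) ℝ) := {R | Rᵀ * R = 1 ∧ R.det = 1}

/-- Euclidean norm of a vector in `ℝ³`. -/
noncomputable def enorm3 (v : Fin 3 → ℝ) : ℝ := ‖(WithLp.equiv 2 (Fin 3 → ℝ)).symm v‖

lemma enorm3_nonneg (v : Fin 3 → ℝ) : 0 ≤ enorm3 v := norm_nonneg _

lemma enorm3_sq (v : Fin 3 → ℝ) : enorm3 v ^ 2 = v ⬝ᵥ v := by
  simp only [enorm3, EuclideanSpace.norm_eq, WithLp.equiv_symm_apply, WithLp.ofLp_toLp, Real.norm_eq_abs,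
    sq_abs, dotProduct]
  rw [Real.sq_sqrt (Finset.sum_nonneg fun i _ => sq_nonneg (v i))]
  simp [sq]

lemma enorm3_add (u v : Fin 3 → ℝ) : enorm3 (u + v) ≤ enorm3 u + enorm3 v := by
  simpa [enorm3] using norm_add_le ((WithLp.equiv 2 (Fin 3 → ℝ)).symm u)
    ((WithLp.equiv 2 (Fin 3 → ℝ)).symm v)

lemma enorm3_rot {R : Matrix (Fin 3) (Fin 3) ℝ} (hR : R ∈ SO3) (v : Fin 3 → ℝ) :
    enorm3 (R.mulVec v) = enorm3 v := by
  have h : enorm3 (R.mulVec v) ^ 2 = enorm3 v ^ 2 := by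
    rw [enorm3_sq, enorm3_sq]
    calc R.mulVec v ⬝ᵥ R.mulVec v = (Rᵀ * R).mulVec v ⬝ᵥ v := by
          rw [Matrix.dotProduct_mulVec, ← Matrix.mulVec_transpose, Matrix.mulVec_mulVec,
            ← Matrix.mulVec_mulVec]
        _ = v ⬝ᵥ v := by rw [hR.1, Matrix.one_mulVec]
  nlinarith [enorm3_nonneg (R.mulVec v), enorm3_nonneg v, sq_nonneg (enorm3 (R.mulVec v) - enorm3 v), sq_nonneg (enorm3 (R.mulVec v) + enorm3 v)]

/-- Time compatibility test: for inlier measurements of keypoints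
`i, j` at times `l, m` with the same rigid shape coefficient `c` and noises bounded
by `ε`, one has `| ‖y_l^i − y_l^j‖ − ‖y_m^i − y_m^j‖ | ≤ 4ε`. -/
theorem stmt_10 (K : ℕ) (eps : ℝ) (heps : 0 ≤ eps)
    (c : Fin K → ℝ)
    (Rl Rm : Matrix (Fin 3) (Fin 3) ℝ) (hRl : Rl ∈ SO3) (hRm : Rm ∈ SO3)
    (pl pm : Fin 3 → ℝ)
    (Bi Bj : Matrix (Fin 3) (Fin K) ℝ)
    (yli ylj ymi ymj εli εlj εmi εmj : Fin 3 → ℝ)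
    (hyli : yli = Rl.mulVec (Bi.mulVec c) + pl + εli)
    (hylj : ylj = Rl.mulVec (Bj.mulVec c) + pl + εlj)
    (hymi : ymi = Rm.mulVec (Bi.mulVec c) + pm + εmi)
    (hymj : ymj = Rm.mulVec (Bj.mulVec c) + pm + εmj)
    (hεli : enorm3 εli ≤ eps) (hεlj : enorm3 εlj ≤ eps)
    (hεmi : enorm3 εmi ≤ eps) (hεmj : enorm3 εmj ≤ eps) :
    |enorm3 (yli - ylj) - enorm3 (ymi - ymj)| ≤ 4 * eps := by
  set d : Fin 3 → ℝ := Bi.mulVec c - Bj.mulVec c with hd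
  have h1 : yli - ylj = Rl.mulVec d + (εli - εlj) := by
    rw [hyli, hylj, hd, Matrix.mulVec_sub]; abel
  have h2 : ymi - ymj = Rm.mulVec d + (εmi - εmj) := by
    rw [hymi, hymj, hd, Matrix.mulVec_sub]; abel
  have key : ∀ (u e : Fin 3 → ℝ), |enorm3 (u + e) - enorm3 u| ≤ enorm3 e := by
    intro u e
    rw [abs_sub_le_iff]
    constructor
    · linarith [enorm3_add u e]
    · have h := enorm3_add (u + e) (-e)
      have hne : enorm3 (-e) = enorm3 e := by simp [enorm3]
      have : u + e + -e = u := by abel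
      rw [this, hne] at h
      linarith
  have b1 : |enorm3 (yli - ylj) - enorm3 d| ≤ 2 * eps := by
    rw [h1]
    have := key (Rl.mulVec d) (εli - εlj)
    rw [enorm3_rot hRl] at this
    have h2 : enorm3 (εli - εlj) ≤ 2 * eps := by
      have := enorm3_add εli (-εlj)
      have hne : enorm3 (-εlj) = enorm3 εlj := by simp [enorm3]
      have he : εli + -εlj = εli - εlj := by abel
      rw [he, hne] at this
      linarith
    calc |enorm3 (Rl.mulVec d + (εli - εlj)) - enorm3 d| ≤ enorm3 (εli - εlj) := this
      _ ≤ 2 * eps := h2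
  have b2 : |enorm3 (ymi - ymj) - enorm3 d| ≤ 2 * eps := by
    rw [h2]
    have := key (Rm.mulVec d) (εmi - εmj)
    rw [enorm3_rot hRm] at this
    have h3 : enorm3 (εmi - εmj) ≤ 2 * eps := by
      have := enorm3_add εmi (-εmj)
      have hne : enorm3 (-εmj) = enorm3 εmj := by simp [enorm3]
      have he : εmi + -εmj = εmi - εmj := by abel
      rw [he, hne] at this
      linarith
    calc |enorm3 (Rm.mulVec d + (εmi - εmj)) - enorm3 d| ≤ enorm3 (εmi - εmj) := this
      _ ≤ 2 * eps := h3
  rw [abs_sub_le_iff] at b1 b2 ⊢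
  constructor <;> linarith [b1.1, b1.2, b2.1, b2.2]
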